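/- Let G be a finite group. Then the nilpotent residual of G centralizes the hypercenter of G, i.e., G^𝔑 ≤ C_G(Z_∞(G)). -/

import Mathlib

open Subgroup Pointwise

/-- `H` is a normal subgroup of `K` (both viewed as subgroups of the ambient group `G`). -/
def NormalIn {G : Type*} [Group G] (H K : Subgroup G) : Prop :=
  H ≤ K ∧ ∀ k ∈ K, ∀ h ∈ H, k * h * k⁻¹ ∈ H

/-- `H` is subnormal in `K`: there is a chain `H = c 0 ⊴ c 1 ⊴ ... ⊴ c n = K`. -/
def SubnormalIn {G : Type*} [Group G] (H K : Subgroup G) : Prop :=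
  ∃ (n : ℕ) (c : ℕ → Subgroup G), c 0 = H ∧ c n = K ∧ ∀ i < n, NormalIn (c i) (c (i + 1))

/-- The hypercenter: the limit of the upper central series. -/
def hypercenter (G : Type*) [Group G] : Subgroup G := ⨆ n, _root_.upperCentralSeries G n

/-- The nilpotent residual: the intersection of all normal subgroups with nilpotent quotient. -/
def nilpotentResidual (G : Type*) [Group G] : Subgroup G :=
  ⨅ N ∈ {N : Subgroup G |
    ∃ h : N.Normal, @Group.IsNilpotent (G ⧸ N) (@QuotientGroup.Quotient.group G _ N h)}, N

/-- The Fitting subgroup: the join of all normal nilpotent subgroups. -/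
def fitting (G : Type*) [Group G] : Subgroup G :=
  ⨆ N ∈ {N : Subgroup G | N.Normal ∧ Group.IsNilpotent N}, N

/-- `N` is a minimal normal subgroup. -/
def IsMinimalNormal {G : Type*} [Group G] (N : Subgroup G) : Prop :=
  N.Normal ∧ N ≠ ⊥ ∧ ∀ K : Subgroup G, K.Normal → K ≤ N → K = ⊥ ∨ K = N

/-- The socle: the join of all minimal normal subgroups. -/
def socle (G : Type*) [Group G] : Subgroup G :=
  ⨆ N ∈ {N : Subgroup G | IsMinimalNormal N}, N

/-- A group is supersolvable if it has a chain of normal subgroups with cyclic factors. -/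
def IsSupersolvable (G : Type*) [Group G] : Prop :=
  ∃ (n : ℕ) (c : ℕ → Subgroup G), c 0 = ⊥ ∧ c n = ⊤ ∧ (∀ i, (c i).Normal) ∧
    ∀ i < n, c i ≤ c (i + 1) ∧ ∃ g : G, c (i + 1) = c i ⊔ Subgroup.zpowers g

/-- A subgroup `H` is pronormal if `H` and each conjugate `H^g` are conjugate in their join. -/
def Pronormal {G : Type*} [Group G] (H : Subgroup G) : Prop :=
  ∀ g : G, ∃ x ∈ H ⊔ H.map (MulAut.conj g).toMonoidHom,
    H.map (MulAut.conj g).toMonoidHom = H.map (MulAut.conj x).toMonoidHom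

/-- A subgroup `H` is abnormal if `g ∈ ⟨H, H^g⟩` for all `g`. -/
def Abnormal {G : Type*} [Group G] (H : Subgroup G) : Prop :=
  ∀ g : G, g ∈ H ⊔ H.map (MulAut.conj g).toMonoidHom

/-- `Δ(G)`: the intersection of all abnormal maximal subgroups. -/
def abnormalDelta (G : Type*) [Group G] : Subgroup G :=
  ⨅ M ∈ {M : Subgroup G | IsCoatom M ∧ Abnormal M}, M

/-- The generalized Fitting subgroup `F̃(G)`: the preimage of `Soc(G/Φ(G))` in `G`. -/
def genFitting (G : Type*) [Group G] : Subgroup G :=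
  (socle (G ⧸ frattini G)).comap (QuotientGroup.mk' (frattini G))

/-- A group is `p`-decomposable if every `p`-element commutes with every `p'`-element. -/
def IsPDecomposable (p : ℕ) (K : Type*) [Group K] : Prop :=
  ∀ a b : K, (∃ n, orderOf a = p ^ n) → Nat.Coprime (orderOf b) p → Commute a b


open scoped commutatorElement

private theorem key_comm' {G : Type*} [Group G] :
    ∀ i j : ℕ, ∀ x ∈ Subgroup.lowerCentralSeries (⊤ : Subgroup G) i, ∀ z ∈ Subgroup.upperCentralSeries G (i + j),
      ⁅x, z⁆ ∈ Subgroup.upperCentralSeries G j := by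
  intro i
  induction i with
  | zero =>
    intro j x _ z hz
    have hz' : z ∈ Subgroup.upperCentralSeries G j := by simpa using hz
    have h1 : x * z * x⁻¹ ∈ Subgroup.upperCentralSeries G j :=
      ((inferInstance : (Subgroup.upperCentralSeries G j).Normal)).conj_mem z hz' x
    simpa [commutatorElement_def, mul_assoc] using mul_mem h1 (inv_mem hz')
  | succ i ih =>
    intro j x hx z hz
    have hzZ : z ∈ Subgroup.upperCentralSeries G ((i + j) + 1) := by
      have h : i + 1 + j = (i + j) + 1 := by omega
      rwa [h] at hz
    have hzZ' : z ∈ Subgroup.upperCentralSeries G (i + (j + 1)) := by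
      have h : i + 1 + j = i + (j + 1) := by omega
      rwa [h] at hz
    have hN : (Subgroup.upperCentralSeries G j).Normal := (inferInstance : (Subgroup.upperCentralSeries G j).Normal)
    rw [Subgroup.lowerCentralSeries_succ] at hx
    induction hx using closure_induction with
    | mem w hw =>
      obtain ⟨a, ha, g, -, rfl⟩ := hw
      have hwc : a * g * a⁻¹ * g⁻¹ = ⁅a, g⁆ := rfl
      have hza : ⁅z⁻¹, a⁻¹⁆ ∈ Subgroup.upperCentralSeries G (j + 1) := by
        rw [← commutatorElement_inv a⁻¹ z⁻¹]
        exact inv_mem (ih (j + 1) a⁻¹ (inv_mem ha) z⁻¹ (inv_mem hzZ'))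
      have hT1 : ⁅g, ⁅z⁻¹, a⁻¹⁆⁆⁻¹ ∈ Subgroup.upperCentralSeries G j := by
        refine inv_mem ?_
        rw [← commutatorElement_inv ⁅z⁻¹, a⁻¹⁆ g]
        exact inv_mem (Subgroup.mem_upperCentralSeries_succ_iff.mp hza g)
      have hgz : ⁅g⁻¹, z⁆ ∈ Subgroup.upperCentralSeries G (i + j) := by
        rw [← commutatorElement_inv z g⁻¹]
        exact inv_mem (Subgroup.mem_upperCentralSeries_succ_iff.mp hzZ g⁻¹)
      have hT2 : ⁅a⁻¹, ⁅g⁻¹, z⁆⁆⁻¹ ∈ Subgroup.upperCentralSeries G j :=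
        inv_mem (ih j a⁻¹ (inv_mem ha) _ hgz)
      have hid : ⁅⁅a, g⁆, z⁆ =
          (a * ((z * ⁅g, ⁅z⁻¹, a⁻¹⁆⁆⁻¹ * z⁻¹) * (g * ⁅a⁻¹, ⁅g⁻¹, z⁆⁆⁻¹ * g⁻¹)) * a⁻¹)⁻¹ := by
        group
      rw [hid]
      exact inv_mem
        (hN.conj_mem _ (mul_mem (hN.conj_mem _ hT1 z) (hN.conj_mem _ hT2 g)) a)
    | one => simpa using (Subgroup.upperCentralSeries G j).one_mem
    | mul p q hp hq ihp ihq =>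
      have he : ⁅p * q, z⁆ = (p * ⁅q, z⁆ * p⁻¹) * ⁅p, z⁆ := by group
      rw [he]; exact mul_mem (hN.conj_mem _ ihq p) ihp
    | inv p hp ihp =>
      have he : ⁅p⁻¹, z⁆ = p⁻¹ * ⁅p, z⁆⁻¹ * (p⁻¹)⁻¹ := by group
      rw [he]; exact hN.conj_mem _ (inv_mem ihp) p⁻¹

private theorem lcs_map_surj' {G H : Type*} [Group G] [Group H] (f : G →* H)
    (hf : Function.Surjective f) (n : ℕ) :
    Subgroup.map f (Subgroup.lowerCentralSeries (⊤ : Subgroup G) n) = Subgroup.lowerCentralSeries (⊤ : Subgroup H) n := by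
  induction n with
  | zero => simpa using map_top_of_surjective f hf
  | succ n ihn =>
    have h1 : Subgroup.lowerCentralSeries (⊤ : Subgroup G) (n + 1) = ⁅Subgroup.lowerCentralSeries (⊤ : Subgroup G) n, (⊤ : Subgroup G)⁆ := rfl
    have h2 : Subgroup.lowerCentralSeries (⊤ : Subgroup H) (n + 1) = ⁅Subgroup.lowerCentralSeries (⊤ : Subgroup H) n, (⊤ : Subgroup H)⁆ := rfl
    rw [h1, h2, map_commutator, ihn, map_top_of_surjective f hf]

private theorem residual_le_lcs' {G : Type*} [Group G] (n : ℕ) :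
    nilpotentResidual G ≤ Subgroup.lowerCentralSeries (⊤ : Subgroup G) n := by
  have hnilp : Group.IsNilpotent (G ⧸ Subgroup.lowerCentralSeries (⊤ : Subgroup G) n) := by
    refine Subgroup.nilpotent_iff_lowerCentralSeries.mpr ⟨n, ?_⟩
    rw [← lcs_map_surj' (QuotientGroup.mk' (Subgroup.lowerCentralSeries (⊤ : Subgroup G) n))
      (QuotientGroup.mk'_surjective _) n]
    rw [Subgroup.map_eq_bot_iff, QuotientGroup.ker_mk']
  exact iInf_le_of_le (Subgroup.lowerCentralSeries (⊤ : Subgroup G) n)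
    (iInf_le_of_le ⟨inferInstance, hnilp⟩ le_rfl)

theorem nilpotentResidual_le_centralizer_hypercenter {G : Type*} [Group G] [Finite G] :
    nilpotentResidual G ≤ Subgroup.centralizer (hypercenter G : Set G) := by
  intro x hx
  rw [Subgroup.mem_centralizer_iff]
  intro z hz
  obtain ⟨n, hzn⟩ := Subgroup.mem_iSup_of_directed
    (Subgroup.upperCentralSeries_mono G).directed_le |>.mp hz
  have hxn : x ∈ Subgroup.lowerCentralSeries (⊤ : Subgroup G) n := residual_le_lcs' n hx
  have hc : ⁅x, z⁆ ∈ Subgroup.upperCentralSeries G 0 :=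
    key_comm' n 0 x hxn z (by simpa using hzn)
  rw [Subgroup.upperCentralSeries_zero, Subgroup.mem_bot,
    commutatorElement_eq_one_iff_mul_comm] at hc
  exact hc.symm
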